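/- In any semi-quantum nonlocal game G, all separable states yield exactly the same optimal payoff: if σ and σ' are separable bipartite states (possibly on different Hilbert spaces), then ℘*(σ;G) = ℘*(σ';G). -/

import Mathlib

open Matrix BigOperators
open scoped Kronecker ComplexOrder

noncomputable section

namespace QNL

/-- A density matrix: positive semidefinite with unit trace. -/
def IsDensity {n : Type*} [Fintype n] (ρ : Matrix n n ℂ) : Prop :=
  ρ.PosSemidef ∧ ρ.trace = 1

/-- A POVM with outcomes in `Fin k`: PSD elements summing to the identity. -/
def IsPOVM {n : Type*} [Fintype n] [DecidableEq n] {k : Type*} [Fintype k]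
    (P : k → Matrix n n ℂ) : Prop :=
  (∀ x, (P x).PosSemidef) ∧ ∑ x, P x = 1

/-- A probability distribution on `Fin k`. -/
def IsProbDist {k : ℕ} (ν : Fin k → ℝ) : Prop :=
  (∀ i, 0 ≤ ν i) ∧ ∑ i, ν i = 1

/-- A completely positive trace-preserving map, via a Kraus representation. -/
def IsCPTP {n m : ℕ}
    (Φ : Matrix (Fin n) (Fin n) ℂ → Matrix (Fin m) (Fin m) ℂ) : Prop :=
  ∃ (r : ℕ) (K : Fin r → Matrix (Fin m) (Fin n) ℂ),
    (∀ X, Φ X = ∑ i, K i * X * (K i)ᴴ) ∧ ∑ i, (K i)ᴴ * K i = 1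

/-- The tensor product `E ⊗ F` of two (linear) maps on matrix spaces, given
entrywise via matrix units. -/
def mapKron {a b a' b' : ℕ}
    (E : Matrix (Fin a) (Fin a) ℂ → Matrix (Fin a') (Fin a') ℂ)
    (F : Matrix (Fin b) (Fin b) ℂ → Matrix (Fin b') (Fin b') ℂ)
    (X : Matrix (Fin a × Fin b) (Fin a × Fin b) ℂ) :
    Matrix (Fin a' × Fin b') (Fin a' × Fin b') ℂ :=
  Matrix.of fun p q => ∑ i : Fin a, ∑ j : Fin a, ∑ k : Fin b, ∑ l : Fin b,
    X (i, k) (j, l) * E (Matrix.single i j 1) p.1 q.1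
      * F (Matrix.single k l 1) p.2 q.2

/-- Local operations and shared randomness: a convex mixture of products of
local CPTP maps. -/
def IsLOSR {a b a' b' : ℕ}
    (Φ : Matrix (Fin a × Fin b) (Fin a × Fin b) ℂ →
      Matrix (Fin a' × Fin b') (Fin a' × Fin b') ℂ) : Prop :=
  ∃ (k : ℕ) (ν : Fin k → ℝ)
    (E : Fin k → Matrix (Fin a) (Fin a) ℂ → Matrix (Fin a') (Fin a') ℂ)
    (F : Fin k → Matrix (Fin b) (Fin b) ℂ → Matrix (Fin b') (Fin b') ℂ),
    IsProbDist ν ∧ (∀ i, IsCPTP (E i)) ∧ (∀ i, IsCPTP (F i)) ∧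
    ∀ X, Φ X = ∑ i, (ν i : ℂ) • mapKron (E i) (F i) X

/-- A separable bipartite state: a finite convex combination of product
density matrices. -/
def IsSeparable {a b : ℕ}
    (σ : Matrix (Fin a × Fin b) (Fin a × Fin b) ℂ) : Prop :=
  ∃ (k : ℕ) (ν : Fin k → ℝ)
    (γ : Fin k → Matrix (Fin a) (Fin a) ℂ)
    (χ : Fin k → Matrix (Fin b) (Fin b) ℂ),
    IsProbDist ν ∧ (∀ i, IsDensity (γ i)) ∧ (∀ i, IsDensity (χ i)) ∧
    σ = ∑ i, (ν i : ℂ) • (γ i ⊗ₖ χ i)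

/-- A semi-quantum nonlocal game. -/
structure SQGame (nS nT nX nY a0 b0 : ℕ) where
  p : Fin nS → ℝ
  q : Fin nT → ℝ
  τ : Fin nS → Matrix (Fin a0) (Fin a0) ℂ
  ω : Fin nT → Matrix (Fin b0) (Fin b0) ℂ
  payoff : Fin nS → Fin nT → Fin nX → Fin nY → ℝ
  hp : IsProbDist p
  hq : IsProbDist q
  hτ : ∀ s, IsDensity (τ s)
  hω : ∀ t, IsDensity (ω t)

/-- The state `τ ⊗ ρ ⊗ ω` on `A₀ ⊗ (A ⊗ B) ⊗ B₀`, written entrywise. -/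
def questionState {a0 a b b0 : ℕ}
    (τ : Matrix (Fin a0) (Fin a0) ℂ)
    (ρ : Matrix (Fin a × Fin b) (Fin a × Fin b) ℂ)
    (ω : Matrix (Fin b0) (Fin b0) ℂ) :
    Matrix (Fin a0 × (Fin a × Fin b) × Fin b0)
      (Fin a0 × (Fin a × Fin b) × Fin b0) ℂ :=
  Matrix.of fun x y => τ x.1 y.1 * ρ x.2.1 y.2.1 * ω x.2.2 y.2.2

/-- The operator `P ⊗ Q` acting on `(A₀A) ⊗ (BB₀)`, arranged on
`A₀ ⊗ (A ⊗ B) ⊗ B₀`, written entrywise. -/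
def localOp {a0 a b b0 : ℕ}
    (P : Matrix (Fin a0 × Fin a) (Fin a0 × Fin a) ℂ)
    (Q : Matrix (Fin b × Fin b0) (Fin b × Fin b0) ℂ) :
    Matrix (Fin a0 × (Fin a × Fin b) × Fin b0)
      (Fin a0 × (Fin a × Fin b) × Fin b0) ℂ :=
  Matrix.of fun x y =>
    P (x.1, x.2.1.1) (y.1, y.2.1.1) * Q (x.2.1.2, x.2.2) (y.2.1.2, y.2.2)

/-- The expected payoff of a state `ρ` in the game `G` with local
measurement strategies `P`, `Q`. -/
def expPayoff {nS nT nX nY a0 b0 a b : ℕ} (G : SQGame nS nT nX nY a0 b0)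
    (ρ : Matrix (Fin a × Fin b) (Fin a × Fin b) ℂ)
    (P : Fin nX → Matrix (Fin a0 × Fin a) (Fin a0 × Fin a) ℂ)
    (Q : Fin nY → Matrix (Fin b × Fin b0) (Fin b × Fin b0) ℂ) : ℝ :=
  ∑ s, ∑ t, ∑ x, ∑ y, G.p s * G.q t * G.payoff s t x y *
    ((localOp (P x) (Q y) * questionState (G.τ s) ρ (G.ω t)).trace).re

/-- The optimal expected payoff `℘*(ρ; G)`. -/
def optPayoff {nS nT nX nY a0 b0 a b : ℕ}
    (G : SQGame nS nT nX nY a0 b0)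
    (ρ : Matrix (Fin a × Fin b) (Fin a × Fin b) ℂ) : ℝ :=
  sSup { r | ∃ (P : Fin nX → Matrix (Fin a0 × Fin a) (Fin a0 × Fin a) ℂ)
      (Q : Fin nY → Matrix (Fin b × Fin b0) (Fin b × Fin b0) ℂ),
      IsPOVM P ∧ IsPOVM Q ∧ r = expPayoff G ρ P Q }

/-- Membership in the convex hull of product POVMs `Co{M(A₀A;X) ⊗ M(BB₀;Y)}`. -/
def InCoHull {nX nY a0 b0 a b : ℕ}
    (Z : Fin nX → Fin nY →
      Matrix (Fin a0 × (Fin a × Fin b) × Fin b0)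
        (Fin a0 × (Fin a × Fin b) × Fin b0) ℂ) : Prop :=
  ∃ (k : ℕ) (ν : Fin k → ℝ)
    (P : Fin k → Fin nX → Matrix (Fin a0 × Fin a) (Fin a0 × Fin a) ℂ)
    (Q : Fin k → Fin nY → Matrix (Fin b × Fin b0) (Fin b × Fin b0) ℂ),
    IsProbDist ν ∧ (∀ i, IsPOVM (P i)) ∧ (∀ i, IsPOVM (Q i)) ∧
    ∀ x y, Z x y = ∑ i, (ν i : ℂ) • localOp (P i x) (Q i y)

/-- The set of question-answer probability distributions achievable with the
state `ρ` and (subnormalized) question ensembles `τ`, `ω`. -/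
def distSet {nS nT nX nY a0 b0 a b : ℕ}
    (ρ : Matrix (Fin a × Fin b) (Fin a × Fin b) ℂ)
    (τ : Fin nS → Matrix (Fin a0) (Fin a0) ℂ)
    (ω : Fin nT → Matrix (Fin b0) (Fin b0) ℂ) :
    Set (Fin nS × Fin nT × Fin nX × Fin nY → ℝ) :=
  { μ | ∃ Z, InCoHull Z ∧ ∀ s t x y,
      μ (s, t, x, y) = ((Z x y * questionState (τ s) ρ (ω t)).trace).re }


section Helpers

variable {a0 b0 a b : ℕ}

/-- The regrouping equivalence `A₀ × ((A×B) × B₀) ≃ (A₀×A) × (B×B₀)`. -/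
def assocE (a0 a b b0 : ℕ) :
    (Fin a0 × (Fin a × Fin b) × Fin b0) ≃ ((Fin a0 × Fin a) × (Fin b × Fin b0)) where
  toFun x := ((x.1, x.2.1.1), (x.2.1.2, x.2.2))
  invFun y := (y.1.1, (y.1.2, y.2.1), y.2.2)
  left_inv := fun _ => rfl
  right_inv := fun _ => rfl

lemma trace_submatrix_equiv' {m n : Type*} [Fintype m] [Fintype n]
    (e : m ≃ n) (A : Matrix n n ℂ) : (A.submatrix e e).trace = A.trace := by
  simp only [Matrix.trace, Matrix.diag, Matrix.submatrix_apply]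
  exact e.sum_comp (fun i => A i i)

lemma localOp_eq (P : Matrix (Fin a0 × Fin a) (Fin a0 × Fin a) ℂ)
    (Q : Matrix (Fin b × Fin b0) (Fin b × Fin b0) ℂ) :
    localOp P Q = (P ⊗ₖ Q).submatrix (assocE a0 a b b0) (assocE a0 a b b0) := rfl

lemma questionState_prod (τ : Matrix (Fin a0) (Fin a0) ℂ)
    (γ : Matrix (Fin a) (Fin a) ℂ) (χ : Matrix (Fin b) (Fin b) ℂ)
    (ω : Matrix (Fin b0) (Fin b0) ℂ) :
    questionState τ (γ ⊗ₖ χ) ω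
      = ((τ ⊗ₖ γ) ⊗ₖ (χ ⊗ₖ ω)).submatrix (assocE a0 a b b0) (assocE a0 a b b0) := by
  ext x y
  simp only [questionState, Matrix.of_apply, Matrix.submatrix_apply,
    Matrix.kroneckerMap_apply, assocE, Equiv.coe_fn_mk]
  ring

lemma trace_localOp_prod (P : Matrix (Fin a0 × Fin a) (Fin a0 × Fin a) ℂ)
    (Q : Matrix (Fin b × Fin b0) (Fin b × Fin b0) ℂ)
    (τ : Matrix (Fin a0) (Fin a0) ℂ)
    (γ : Matrix (Fin a) (Fin a) ℂ) (χ : Matrix (Fin b) (Fin b) ℂ)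
    (ω : Matrix (Fin b0) (Fin b0) ℂ) :
    (localOp P Q * questionState τ (γ ⊗ₖ χ) ω).trace
      = (P * (τ ⊗ₖ γ)).trace * (Q * (χ ⊗ₖ ω)).trace := by
  rw [localOp_eq, questionState_prod, Matrix.submatrix_mul_equiv,
    trace_submatrix_equiv', ← Matrix.mul_kronecker_mul, Matrix.trace_kronecker]

end Helpers
section Helpers2

variable {a0 b0 a b : ℕ}

/-- Alice's effective POVM element on `A₀`: contraction of `P` against `γ`. -/
def contractA (P : Matrix (Fin a0 × Fin a) (Fin a0 × Fin a) ℂ)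
    (γ : Matrix (Fin a) (Fin a) ℂ) : Matrix (Fin a0) (Fin a0) ℂ :=
  Matrix.of fun u v => ∑ p, ∑ p', P (u, p) (v, p') * γ p' p

/-- Bob's effective POVM element on `B₀`: contraction of `Q` against `χ`. -/
def contractB (Q : Matrix (Fin b × Fin b0) (Fin b × Fin b0) ℂ)
    (χ : Matrix (Fin b) (Fin b) ℂ) : Matrix (Fin b0) (Fin b0) ℂ :=
  Matrix.of fun w z => ∑ q, ∑ q', Q (q, w) (q', z) * χ q' q

lemma trace_contractA (P : Matrix (Fin a0 × Fin a) (Fin a0 × Fin a) ℂ)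
    (γ : Matrix (Fin a) (Fin a) ℂ) (τ : Matrix (Fin a0) (Fin a0) ℂ) :
    (contractA P γ * τ).trace = (P * (τ ⊗ₖ γ)).trace := by
  simp only [Matrix.trace, Matrix.diag, Matrix.mul_apply, contractA, Matrix.of_apply,
    Matrix.kroneckerMap_apply, Fintype.sum_prod_type, Finset.sum_mul]
  conv_lhs => enter [2, u]; rw [Finset.sum_comm]
  refine Finset.sum_congr rfl fun u _ => Finset.sum_congr rfl fun p _ =>
    Finset.sum_congr rfl fun v _ => Finset.sum_congr rfl fun p' _ => by ring

lemma trace_contractB (Q : Matrix (Fin b × Fin b0) (Fin b × Fin b0) ℂ)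
    (χ : Matrix (Fin b) (Fin b) ℂ) (ω : Matrix (Fin b0) (Fin b0) ℂ) :
    (contractB Q χ * ω).trace = (Q * (χ ⊗ₖ ω)).trace := by
  simp only [Matrix.trace, Matrix.diag, Matrix.mul_apply, contractB, Matrix.of_apply,
    Matrix.kroneckerMap_apply, Fintype.sum_prod_type, Finset.sum_mul]
  conv_lhs => enter [2, w]; rw [Finset.sum_comm]
  rw [Finset.sum_comm]
  conv_lhs => enter [2, q, 2, w]; rw [Finset.sum_comm]
  refine Finset.sum_congr rfl fun q _ => Finset.sum_congr rfl fun w _ =>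
    Finset.sum_congr rfl fun q' _ => Finset.sum_congr rfl fun z _ => by ring

end Helpers2
section Helpers3

variable {a0 b0 a b : ℕ}

lemma kron_conjTranspose {m n p q : Type*} (A : Matrix m n ℂ) (B : Matrix p q ℂ) :
    (A ⊗ₖ B)ᴴ = Aᴴ ⊗ₖ Bᴴ := by
  ext x y
  simp only [Matrix.conjTranspose_apply, Matrix.kroneckerMap_apply, star_mul']

open scoped MatrixOrder in
theorem Matrix.posSemidef_iff_eq_transpose_mul_self {m : Type*} [Fintype m] [DecidableEq m]
    {A : Matrix m m ℂ} : A.PosSemidef ↔ ∃ B : Matrix m m ℂ, A = Bᴴ * B := by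
  constructor
  · intro hA
    obtain ⟨X, hX, -, rfl⟩ :=
      CFC.exists_sqrt_of_isSelfAdjoint_of_quasispectrumRestricts hA.isHermitian
        (QuasispectrumRestricts.nnreal_of_nonneg hA.nonneg)
    exact ⟨X, (congrArg (· * X) hX).symm⟩
  · rintro ⟨B, rfl⟩
    exact posSemidef_conjTranspose_mul_self B

lemma posSemidef_kron {m p : Type*} [Fintype m] [Fintype p] [DecidableEq m] [DecidableEq p]
    {A : Matrix m m ℂ} {B : Matrix p p ℂ}
    (hA : A.PosSemidef) (hB : B.PosSemidef) : (A ⊗ₖ B).PosSemidef := by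
  obtain ⟨C, rfl⟩ := Matrix.posSemidef_iff_eq_transpose_mul_self.mp hA
  obtain ⟨D, rfl⟩ := Matrix.posSemidef_iff_eq_transpose_mul_self.mp hB
  rw [Matrix.posSemidef_iff_eq_transpose_mul_self]
  exact ⟨C ⊗ₖ D, by rw [kron_conjTranspose, ← Matrix.mul_kronecker_mul]⟩

lemma psd_trace_nonneg {m : Type*} [Fintype m] [DecidableEq m] {A : Matrix m m ℂ}
    (hA : A.PosSemidef) : 0 ≤ A.trace := by
  refine Finset.sum_nonneg fun i _ => ?_
  have h := hA.dotProduct_mulVec_nonneg (Pi.single i 1)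
  simpa [dotProduct, Matrix.mulVec, Pi.single_apply] using h

lemma trace_mul_psd_nonneg {m : Type*} [Fintype m] [DecidableEq m]
    {A B : Matrix m m ℂ} (hA : A.PosSemidef) (hB : B.PosSemidef) :
    0 ≤ (A * B).trace := by
  obtain ⟨C, rfl⟩ := Matrix.posSemidef_iff_eq_transpose_mul_self.mp hA
  rw [Matrix.mul_assoc, Matrix.trace_mul_comm]
  exact psd_trace_nonneg (hB.mul_mul_conjTranspose_same C)

end Helpers3
section Helpers4

variable {a0 b0 a b : ℕ}

lemma posSemidef_contractA {P : Matrix (Fin a0 × Fin a) (Fin a0 × Fin a) ℂ}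
    {γ : Matrix (Fin a) (Fin a) ℂ} (hP : P.PosSemidef) (hγ : γ.PosSemidef) :
    (contractA P γ).PosSemidef := by
  obtain ⟨B, hB⟩ := Matrix.posSemidef_iff_eq_transpose_mul_self.mp hγ
  refine Matrix.posSemidef_iff_dotProduct_mulVec.mpr ⟨?_, ?_⟩
  · show (contractA P γ)ᴴ = contractA P γ
    ext u v
    simp only [Matrix.conjTranspose_apply, contractA, Matrix.of_apply, star_sum, star_mul']
    rw [Finset.sum_comm]
    refine Finset.sum_congr rfl fun p _ => Finset.sum_congr rfl fun p' _ => ?_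
    rw [hP.1.apply, hγ.1.apply]
  · intro x
    have key : dotProduct (star x) ((contractA P γ) *ᵥ x)
        = ∑ m, dotProduct (star fun vp : Fin a0 × Fin a => x vp.1 * star (B m vp.2))
            (P *ᵥ fun vp : Fin a0 × Fin a => x vp.1 * star (B m vp.2)) := by
      simp only [dotProduct, Matrix.mulVec, Matrix.of_apply, contractA, hB,
        Matrix.mul_apply, Matrix.conjTranspose_apply, Pi.star_apply, star_mul', star_star,
        Fintype.sum_prod_type, Finset.mul_sum, Finset.sum_mul]
      conv_lhs => enter [2, u, 2, v, 2, p]; rw [Finset.sum_comm]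
      conv_lhs => enter [2, u, 2, v]; rw [Finset.sum_comm]
      conv_lhs => enter [2, u]; rw [Finset.sum_comm]
      rw [Finset.sum_comm]
      conv_lhs => enter [2, m, 2, u]; rw [Finset.sum_comm]
      refine Finset.sum_congr rfl fun m _ => Finset.sum_congr rfl fun u _ =>
        Finset.sum_congr rfl fun p _ => Finset.sum_congr rfl fun v _ =>
        Finset.sum_congr rfl fun p' _ => by ring
    rw [key]
    exact Finset.sum_nonneg fun m _ => hP.dotProduct_mulVec_nonneg _

end Helpers4
section Helpers5

variable {a0 b0 a b : ℕ}

lemma posSemidef_contractB {Q : Matrix (Fin b × Fin b0) (Fin b × Fin b0) ℂ}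
    {χ : Matrix (Fin b) (Fin b) ℂ} (hQ : Q.PosSemidef) (hχ : χ.PosSemidef) :
    (contractB Q χ).PosSemidef := by
  obtain ⟨B, hB⟩ := Matrix.posSemidef_iff_eq_transpose_mul_self.mp hχ
  refine Matrix.posSemidef_iff_dotProduct_mulVec.mpr ⟨?_, ?_⟩
  · show (contractB Q χ)ᴴ = contractB Q χ
    ext w z
    simp only [Matrix.conjTranspose_apply, contractB, Matrix.of_apply, star_sum, star_mul']
    rw [Finset.sum_comm]
    refine Finset.sum_congr rfl fun q _ => Finset.sum_congr rfl fun q' _ => ?_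
    rw [hQ.1.apply, hχ.1.apply]
  · intro x
    have key : dotProduct (star x) ((contractB Q χ) *ᵥ x)
        = ∑ m, dotProduct (star fun qw : Fin b × Fin b0 => x qw.2 * star (B m qw.1))
            (Q *ᵥ fun qw : Fin b × Fin b0 => x qw.2 * star (B m qw.1)) := by
      simp only [dotProduct, Matrix.mulVec, Matrix.of_apply, contractB, hB,
        Matrix.mul_apply, Matrix.conjTranspose_apply, Pi.star_apply, star_mul', star_star,
        Fintype.sum_prod_type, Finset.mul_sum, Finset.sum_mul]
      conv_lhs => enter [2, w, 2, z, 2, q]; rw [Finset.sum_comm]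
      conv_lhs => enter [2, w, 2, z]; rw [Finset.sum_comm]
      conv_lhs => enter [2, w]; rw [Finset.sum_comm]
      rw [Finset.sum_comm]
      conv_lhs => enter [2, m, 2, w]; rw [Finset.sum_comm]
      conv_lhs => enter [2, m]; rw [Finset.sum_comm]
      conv_lhs => enter [2, m, 2, q, 2, w]; rw [Finset.sum_comm]
      refine Finset.sum_congr rfl fun m _ => Finset.sum_congr rfl fun q _ =>
        Finset.sum_congr rfl fun w _ => Finset.sum_congr rfl fun q' _ =>
        Finset.sum_congr rfl fun z _ => by ring
    rw [key]
    exact Finset.sum_nonneg fun m _ => hQ.dotProduct_mulVec_nonneg _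

end Helpers5
section Helpers6

variable {a0 b0 a b : ℕ}

lemma sum_contractA {nX : ℕ} {P : Fin nX → Matrix (Fin a0 × Fin a) (Fin a0 × Fin a) ℂ}
    {γ : Matrix (Fin a) (Fin a) ℂ} (hP : ∑ x, P x = 1) (hγ : γ.trace = 1) :
    ∑ x, contractA (P x) γ = 1 := by
  ext u v
  simp only [Matrix.sum_apply, contractA, Matrix.of_apply]
  rw [Finset.sum_comm]
  conv_lhs => enter [2, p]; rw [Finset.sum_comm]
  simp only [← Finset.sum_mul, ← Matrix.sum_apply, hP]
  by_cases h : u = v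
  · subst h
    simp only [Matrix.one_apply, Prod.mk.injEq, true_and]
    simp only [ite_mul, one_mul, zero_mul, Finset.sum_ite_eq, Finset.mem_univ, if_true]
    simpa [Matrix.trace, Matrix.diag] using hγ
  · simp [Matrix.one_apply, Prod.mk.injEq, h]

lemma sum_contractB {nY : ℕ} {Q : Fin nY → Matrix (Fin b × Fin b0) (Fin b × Fin b0) ℂ}
    {χ : Matrix (Fin b) (Fin b) ℂ} (hQ : ∑ y, Q y = 1) (hχ : χ.trace = 1) :
    ∑ y, contractB (Q y) χ = 1 := by
  ext w z
  simp only [Matrix.sum_apply, contractB, Matrix.of_apply]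
  rw [Finset.sum_comm]
  conv_lhs => enter [2, q]; rw [Finset.sum_comm]
  simp only [← Finset.sum_mul, ← Matrix.sum_apply, hQ]
  by_cases h : w = z
  · subst h
    simp only [Matrix.one_apply, Prod.mk.injEq, and_true]
    simp only [ite_mul, one_mul, zero_mul, Finset.sum_ite_eq, Finset.mem_univ, if_true]
    simpa [Matrix.trace, Matrix.diag] using hχ
  · simp [Matrix.one_apply, Prod.mk.injEq, h]

lemma sum_kron_right {k : ℕ} {m p : Type*} [Fintype m] [Fintype p]
    (M : Fin k → Matrix m m ℂ) (N : Matrix p p ℂ) :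
    ∑ x, (M x ⊗ₖ N) = (∑ x, M x) ⊗ₖ N := by
  ext i j
  simp [Matrix.sum_apply, Matrix.kroneckerMap_apply, Finset.sum_mul]

lemma sum_kron_left {k : ℕ} {m p : Type*} [Fintype m] [Fintype p]
    (M : Fin k → Matrix m m ℂ) (N : Matrix p p ℂ) :
    ∑ x, (N ⊗ₖ M x) = N ⊗ₖ (∑ x, M x) := by
  ext i j
  simp [Matrix.sum_apply, Matrix.kroneckerMap_apply, Finset.mul_sum]

lemma nonempty_of_density {m : Type*} [Fintype m] {ρ : Matrix m m ℂ}
    (h : IsDensity ρ) : Nonempty m := by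
  by_contra h'
  haveI := not_nonempty_iff.mp h'
  have h0 : ρ.trace = 0 := by simp [Matrix.trace]
  rw [h.2] at h0
  exact one_ne_zero h0

lemma exists_density (n : ℕ) (hn : 0 < n) :
    ∃ γ : Matrix (Fin n) (Fin n) ℂ, IsDensity γ := by
  haveI : NeZero n := ⟨hn.ne'⟩
  refine ⟨Matrix.single 0 0 1, ?_, ?_⟩
  · rw [Matrix.posSemidef_iff_eq_transpose_mul_self]
    refine ⟨Matrix.single 0 0 1, ?_⟩
    ext i j
    simp only [Matrix.mul_apply, Matrix.conjTranspose_apply, Matrix.single,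
      Matrix.of_apply, ite_mul, zero_mul, mul_ite, mul_zero, ite_and, Finset.sum_ite_eq,
      Finset.mem_univ, if_true, apply_ite (star : ℂ → ℂ), star_one, star_zero, mul_one]
    by_cases hi : (0 : Fin n) = i <;> by_cases hj : (0 : Fin n) = j <;> simp [hi, hj]
  · simp [Matrix.trace, Matrix.diag, Matrix.single, Matrix.of_apply, Finset.sum_ite_eq]

end Helpers6
section Helpers7

variable {a0 b0 a b : ℕ}

lemma questionState_sum {k : ℕ} (τ : Matrix (Fin a0) (Fin a0) ℂ)
    (ω : Matrix (Fin b0) (Fin b0) ℂ) (c : Fin k → ℝ)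
    (ρi : Fin k → Matrix (Fin a × Fin b) (Fin a × Fin b) ℂ) :
    questionState τ (∑ i, (c i : ℂ) • ρi i) ω
      = ∑ i, (c i : ℂ) • questionState τ (ρi i) ω := by
  ext x y
  simp only [questionState, Matrix.of_apply, Matrix.sum_apply, Matrix.smul_apply,
    smul_eq_mul, Finset.mul_sum, Finset.sum_mul]
  exact Finset.sum_congr rfl fun i _ => by ring

lemma trace_localOp_linear {k : ℕ}
    (A : Matrix (Fin a0 × Fin a) (Fin a0 × Fin a) ℂ)
    (B : Matrix (Fin b × Fin b0) (Fin b × Fin b0) ℂ)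
    (τ : Matrix (Fin a0) (Fin a0) ℂ) (ω : Matrix (Fin b0) (Fin b0) ℂ)
    (c : Fin k → ℝ) (ρi : Fin k → Matrix (Fin a × Fin b) (Fin a × Fin b) ℂ) :
    (localOp A B * questionState τ (∑ i, (c i : ℂ) • ρi i) ω).trace
      = ∑ i, (c i : ℂ) * (localOp A B * questionState τ (ρi i) ω).trace := by
  rw [questionState_sum, Finset.mul_sum, Matrix.trace_sum]
  exact Finset.sum_congr rfl fun i _ => by rw [Matrix.mul_smul, Matrix.trace_smul, smul_eq_mul]

lemma questionState_eq_kron (τ : Matrix (Fin a0) (Fin a0) ℂ)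
    (ρ : Matrix (Fin a × Fin b) (Fin a × Fin b) ℂ) (ω : Matrix (Fin b0) (Fin b0) ℂ) :
    questionState τ ρ ω = τ ⊗ₖ (ρ ⊗ₖ ω) := by
  ext x y
  simp [questionState, Matrix.kroneckerMap_apply, mul_assoc]

lemma trace_questionState (τ : Matrix (Fin a0) (Fin a0) ℂ)
    (ρ : Matrix (Fin a × Fin b) (Fin a × Fin b) ℂ) (ω : Matrix (Fin b0) (Fin b0) ℂ) :
    (questionState τ ρ ω).trace = τ.trace * (ρ.trace * ω.trace) := by
  rw [questionState_eq_kron, Matrix.trace_kronecker, Matrix.trace_kronecker]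

lemma posSemidef_localOp {A : Matrix (Fin a0 × Fin a) (Fin a0 × Fin a) ℂ}
    {B : Matrix (Fin b × Fin b0) (Fin b × Fin b0) ℂ}
    (hA : A.PosSemidef) (hB : B.PosSemidef) : (localOp A B).PosSemidef := by
  rw [localOp_eq]
  exact (posSemidef_kron hA hB).submatrix _

lemma posSemidef_questionState {τ : Matrix (Fin a0) (Fin a0) ℂ}
    {ρ : Matrix (Fin a × Fin b) (Fin a × Fin b) ℂ} {ω : Matrix (Fin b0) (Fin b0) ℂ}
    (hτ : τ.PosSemidef) (hρ : ρ.PosSemidef) (hω : ω.PosSemidef) :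
    (questionState τ ρ ω).PosSemidef := by
  rw [questionState_eq_kron]
  exact posSemidef_kron hτ (posSemidef_kron hρ hω)

/-- The key simulation identity. -/
lemma trace_simulate {a' b' k' : ℕ}
    (P : Matrix (Fin a0 × Fin a) (Fin a0 × Fin a) ℂ)
    (Q : Matrix (Fin b × Fin b0) (Fin b × Fin b0) ℂ)
    (τ : Matrix (Fin a0) (Fin a0) ℂ) (ω : Matrix (Fin b0) (Fin b0) ℂ)
    (γ : Matrix (Fin a) (Fin a) ℂ) (χ : Matrix (Fin b) (Fin b) ℂ)
    (μ : Fin k' → ℝ) (hμ : ∑ j, μ j = 1)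
    (γ' : Fin k' → Matrix (Fin a') (Fin a') ℂ)
    (χ' : Fin k' → Matrix (Fin b') (Fin b') ℂ)
    (hγ' : ∀ j, (γ' j).trace = 1) (hχ' : ∀ j, (χ' j).trace = 1) :
    (localOp (contractA P γ ⊗ₖ (1 : Matrix (Fin a') (Fin a') ℂ))
        ((1 : Matrix (Fin b') (Fin b') ℂ) ⊗ₖ contractB Q χ)
      * questionState τ (∑ j, (μ j : ℂ) • (γ' j ⊗ₖ χ' j)) ω).trace
      = (localOp P Q * questionState τ (γ ⊗ₖ χ) ω).trace := by
  rw [trace_localOp_linear, trace_localOp_prod, ← trace_contractA, ← trace_contractB]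
  have hterm : ∀ j, (localOp (contractA P γ ⊗ₖ (1 : Matrix (Fin a') (Fin a') ℂ))
      ((1 : Matrix (Fin b') (Fin b') ℂ) ⊗ₖ contractB Q χ)
      * questionState τ (γ' j ⊗ₖ χ' j) ω).trace
      = (contractA P γ * τ).trace * (contractB Q χ * ω).trace := by
    intro j
    rw [trace_localOp_prod, ← Matrix.mul_kronecker_mul, ← Matrix.mul_kronecker_mul,
      Matrix.trace_kronecker, Matrix.trace_kronecker, Matrix.one_mul, Matrix.one_mul,
      hγ' j, hχ' j]
    ring
  simp only [hterm, ← Finset.sum_mul]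
  norm_cast
  rw [hμ, Complex.ofReal_one, one_mul]
end Helpers7
section Helpers8

variable {a0 b0 a b nS nT nX nY : ℕ}

lemma expPayoff_sum {k : ℕ} (G : SQGame nS nT nX nY a0 b0) (ν : Fin k → ℝ)
    (ρi : Fin k → Matrix (Fin a × Fin b) (Fin a × Fin b) ℂ)
    (P : Fin nX → Matrix (Fin a0 × Fin a) (Fin a0 × Fin a) ℂ)
    (Q : Fin nY → Matrix (Fin b × Fin b0) (Fin b × Fin b0) ℂ) :
    expPayoff G (∑ i, (ν i : ℂ) • ρi i) P Q = ∑ i, ν i * expPayoff G (ρi i) P Q := by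
  unfold expPayoff
  have hterm : ∀ s t x y,
      ((localOp (P x) (Q y) * questionState (G.τ s) (∑ i, (ν i : ℂ) • ρi i) (G.ω t)).trace).re
      = ∑ i, ν i * ((localOp (P x) (Q y) * questionState (G.τ s) (ρi i) (G.ω t)).trace).re := by
    intro s t x y
    rw [trace_localOp_linear, Complex.re_sum]
    exact Finset.sum_congr rfl fun i _ => by
      rw [Complex.mul_re]; simp
  simp only [hterm, Finset.mul_sum]
  conv_lhs => enter [2, s, 2, t, 2, x]; rw [Finset.sum_comm]
  conv_lhs => enter [2, s, 2, t]; rw [Finset.sum_comm]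
  conv_lhs => enter [2, s]; rw [Finset.sum_comm]
  rw [Finset.sum_comm]
  refine Finset.sum_congr rfl fun i _ => ?_
  exact Finset.sum_congr rfl fun s _ => Finset.sum_congr rfl fun t _ =>
    Finset.sum_congr rfl fun x _ => Finset.sum_congr rfl fun y _ => by ring

lemma expPayoff_simulate {a' b' k' : ℕ} (G : SQGame nS nT nX nY a0 b0)
    (γ : Matrix (Fin a) (Fin a) ℂ) (χ : Matrix (Fin b) (Fin b) ℂ)
    (P : Fin nX → Matrix (Fin a0 × Fin a) (Fin a0 × Fin a) ℂ)
    (Q : Fin nY → Matrix (Fin b × Fin b0) (Fin b × Fin b0) ℂ)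
    (μ : Fin k' → ℝ) (hμ : ∑ j, μ j = 1)
    (γ' : Fin k' → Matrix (Fin a') (Fin a') ℂ)
    (χ' : Fin k' → Matrix (Fin b') (Fin b') ℂ)
    (hγ' : ∀ j, (γ' j).trace = 1) (hχ' : ∀ j, (χ' j).trace = 1) :
    expPayoff G (∑ j, (μ j : ℂ) • (γ' j ⊗ₖ χ' j))
      (fun x => contractA (P x) γ ⊗ₖ (1 : Matrix (Fin a') (Fin a') ℂ))
      (fun y => (1 : Matrix (Fin b') (Fin b') ℂ) ⊗ₖ contractB (Q y) χ)
      = expPayoff G (γ ⊗ₖ χ) P Q := by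
  unfold expPayoff
  refine Finset.sum_congr rfl fun s _ => Finset.sum_congr rfl fun t _ =>
    Finset.sum_congr rfl fun x _ => Finset.sum_congr rfl fun y _ => ?_
  rw [trace_simulate _ _ _ _ _ _ μ hμ γ' χ' hγ' hχ']

lemma isPOVM_tildeA {a' : ℕ} {P : Fin nX → Matrix (Fin a0 × Fin a) (Fin a0 × Fin a) ℂ}
    (hP : IsPOVM P) {γ : Matrix (Fin a) (Fin a) ℂ} (hγ : IsDensity γ) :
    IsPOVM (fun x => contractA (P x) γ ⊗ₖ (1 : Matrix (Fin a') (Fin a') ℂ)) := by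
  refine ⟨fun x => posSemidef_kron (posSemidef_contractA (hP.1 x) hγ.1) Matrix.PosSemidef.one, ?_⟩
  rw [sum_kron_right, sum_contractA hP.2 hγ.2, Matrix.one_kronecker_one]

lemma isPOVM_tildeB {b' : ℕ} {Q : Fin nY → Matrix (Fin b × Fin b0) (Fin b × Fin b0) ℂ}
    (hQ : IsPOVM Q) {χ : Matrix (Fin b) (Fin b) ℂ} (hχ : IsDensity χ) :
    IsPOVM (fun y => (1 : Matrix (Fin b') (Fin b') ℂ) ⊗ₖ contractB (Q y) χ) := by
  refine ⟨fun y => posSemidef_kron Matrix.PosSemidef.one (posSemidef_contractB (hQ.1 y) hχ.1), ?_⟩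
  rw [sum_kron_left, sum_contractB hQ.2 hχ.2, Matrix.one_kronecker_one]

lemma sum_localOp (P : Fin nX → Matrix (Fin a0 × Fin a) (Fin a0 × Fin a) ℂ)
    (Q : Fin nY → Matrix (Fin b × Fin b0) (Fin b × Fin b0) ℂ) :
    ∑ x, ∑ y, localOp (P x) (Q y) = localOp (∑ x, P x) (∑ y, Q y) := by
  ext i j
  simp [localOp, Matrix.sum_apply, Finset.sum_mul_sum]

lemma localOp_one_one :
    localOp (1 : Matrix (Fin a0 × Fin a) (Fin a0 × Fin a) ℂ)
      (1 : Matrix (Fin b × Fin b0) (Fin b × Fin b0) ℂ) = 1 := by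
  rw [localOp_eq, Matrix.one_kronecker_one, Matrix.submatrix_one_equiv]

/-- The total payoff weight: a uniform bound on achievable payoffs. -/
def gameBound (G : SQGame nS nT nX nY a0 b0) : ℝ :=
  ∑ s, ∑ t, ∑ x, ∑ y, |G.p s * G.q t * G.payoff s t x y|

lemma expPayoff_le_bound (G : SQGame nS nT nX nY a0 b0)
    {ρ : Matrix (Fin a × Fin b) (Fin a × Fin b) ℂ} (hρ : IsDensity ρ)
    {P : Fin nX → Matrix (Fin a0 × Fin a) (Fin a0 × Fin a) ℂ}
    {Q : Fin nY → Matrix (Fin b × Fin b0) (Fin b × Fin b0) ℂ}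
    (hP : IsPOVM P) (hQ : IsPOVM Q) :
    expPayoff G ρ P Q ≤ gameBound G := by
  refine Finset.sum_le_sum fun s _ => Finset.sum_le_sum fun t _ => ?_
  have hnn : ∀ x y, 0 ≤ ((localOp (P x) (Q y)
      * questionState (G.τ s) ρ (G.ω t)).trace).re := by
    intro x y
    have h := trace_mul_psd_nonneg (posSemidef_localOp (hP.1 x) (hQ.1 y))
      (posSemidef_questionState (G.hτ s).1 hρ.1 (G.hω t).1)
    exact (Complex.nonneg_iff.mp h).1
  have hsum1 : ∑ x, ∑ y, ((localOp (P x) (Q y)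
      * questionState (G.τ s) ρ (G.ω t)).trace).re = 1 := by
    have : ∑ x, ∑ y, (localOp (P x) (Q y) * questionState (G.τ s) ρ (G.ω t)).trace
        = 1 := by
      have h2 : ∑ x, ∑ y, (localOp (P x) (Q y) * questionState (G.τ s) ρ (G.ω t)).trace
          = ((∑ x, ∑ y, localOp (P x) (Q y)) * questionState (G.τ s) ρ (G.ω t)).trace := by
        rw [Finset.sum_mul, Matrix.trace_sum]
        exact Finset.sum_congr rfl fun x _ => by rw [Finset.sum_mul, Matrix.trace_sum]
      rw [h2, sum_localOp, hP.2, hQ.2, localOp_one_one, Matrix.one_mul,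
        trace_questionState, (G.hτ s).2, hρ.2, (G.hω t).2]
      ring
    calc ∑ x, ∑ y, ((localOp (P x) (Q y) * questionState (G.τ s) ρ (G.ω t)).trace).re
        = ((∑ x, ∑ y, (localOp (P x) (Q y) * questionState (G.τ s) ρ (G.ω t)).trace)).re := by
          rw [Complex.re_sum]
          exact Finset.sum_congr rfl fun x _ => by rw [Complex.re_sum]
      _ = 1 := by rw [this]; rfl
  have hle1 : ∀ x y, ((localOp (P x) (Q y)
      * questionState (G.τ s) ρ (G.ω t)).trace).re ≤ 1 := by
    intro x y
    rw [← hsum1]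
    calc ((localOp (P x) (Q y) * questionState (G.τ s) ρ (G.ω t)).trace).re
        ≤ ∑ y', ((localOp (P x) (Q y') * questionState (G.τ s) ρ (G.ω t)).trace).re :=
          Finset.single_le_sum (fun y' _ => hnn x y') (Finset.mem_univ y)
      _ ≤ _ := Finset.single_le_sum
          (fun x' _ => Finset.sum_nonneg fun y' _ => hnn x' y') (Finset.mem_univ x)
  refine Finset.sum_le_sum fun x _ => Finset.sum_le_sum fun y _ => ?_
  calc G.p s * G.q t * G.payoff s t x y
        * ((localOp (P x) (Q y) * questionState (G.τ s) ρ (G.ω t)).trace).re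
      ≤ |G.p s * G.q t * G.payoff s t x y|
        * ((localOp (P x) (Q y) * questionState (G.τ s) ρ (G.ω t)).trace).re :=
        mul_le_mul_of_nonneg_right (le_abs_self _) (hnn x y)
    _ ≤ |G.p s * G.q t * G.payoff s t x y| * 1 :=
        mul_le_mul_of_nonneg_left (hle1 x y) (abs_nonneg _)
    _ = _ := mul_one _

end Helpers8
lemma optPayoff_le_of_separable {nS nT nX nY a0 b0 a b a' b' : ℕ}
    (G : SQGame nS nT nX nY a0 b0)
    (σ : Matrix (Fin a × Fin b) (Fin a × Fin b) ℂ)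
    (σ' : Matrix (Fin a' × Fin b') (Fin a' × Fin b') ℂ)
    (hσd : IsDensity σ) (hσ'd : IsDensity σ')
    (hσ : IsSeparable σ) (hσ' : IsSeparable σ') :
    optPayoff G σ ≤ optPayoff G σ' := by
  obtain ⟨k, ν, γ, χ, hν, hγ, hχ, hσeq⟩ := hσ
  obtain ⟨k', μ, γ', χ', hμ, hγ', hχ', hσ'eq⟩ := hσ'
  obtain ⟨⟨ia, ib⟩⟩ := nonempty_of_density hσ'd
  have ha' : 0 < a' := ia.pos
  have hb' : 0 < b' := ib.pos
  have hBdd : BddAbove { r | ∃ (P : Fin nX → Matrix (Fin a0 × Fin a') (Fin a0 × Fin a') ℂ)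
      (Q : Fin nY → Matrix (Fin b' × Fin b0) (Fin b' × Fin b0) ℂ),
      IsPOVM P ∧ IsPOVM Q ∧ r = expPayoff G σ' P Q } := by
    refine ⟨gameBound G, ?_⟩
    rintro r ⟨P, Q, hP, hQ, rfl⟩
    exact expPayoff_le_bound G hσ'd hP hQ
  unfold optPayoff
  rcases Set.eq_empty_or_nonempty
    { r | ∃ (P : Fin nX → Matrix (Fin a0 × Fin a) (Fin a0 × Fin a) ℂ)
      (Q : Fin nY → Matrix (Fin b × Fin b0) (Fin b × Fin b0) ℂ),
      IsPOVM P ∧ IsPOVM Q ∧ r = expPayoff G σ P Q } with hS | hS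
  · have hS' : { r | ∃ (P : Fin nX → Matrix (Fin a0 × Fin a') (Fin a0 × Fin a') ℂ)
        (Q : Fin nY → Matrix (Fin b' × Fin b0) (Fin b' × Fin b0) ℂ),
        IsPOVM P ∧ IsPOVM Q ∧ r = expPayoff G σ' P Q } = ∅ := by
      rw [Set.eq_empty_iff_forall_notMem]
      rintro r ⟨P', Q', hP', hQ', rfl⟩
      obtain ⟨γ0, hγ0⟩ := exists_density a' ha'
      obtain ⟨χ0, hχ0⟩ := exists_density b' hb'
      have hmem : expPayoff G σ
          (fun x => contractA (P' x) γ0 ⊗ₖ (1 : Matrix (Fin a) (Fin a) ℂ))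
          (fun y => (1 : Matrix (Fin b) (Fin b) ℂ) ⊗ₖ contractB (Q' y) χ0)
          ∈ { r | ∃ (P : Fin nX → Matrix (Fin a0 × Fin a) (Fin a0 × Fin a) ℂ)
            (Q : Fin nY → Matrix (Fin b × Fin b0) (Fin b × Fin b0) ℂ),
            IsPOVM P ∧ IsPOVM Q ∧ r = expPayoff G σ P Q } :=
        ⟨_, _, isPOVM_tildeA hP' hγ0, isPOVM_tildeB hQ' hχ0, rfl⟩
      rw [hS] at hmem
      exact hmem
    rw [hS, hS']
  · refine csSup_le hS ?_
    rintro r ⟨P, Q, hP, hQ, rfl⟩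
    rw [hσeq, expPayoff_sum G ν _ P Q]
    have hle : ∀ i, expPayoff G (γ i ⊗ₖ χ i) P Q
        ≤ sSup { r | ∃ (P : Fin nX → Matrix (Fin a0 × Fin a') (Fin a0 × Fin a') ℂ)
          (Q : Fin nY → Matrix (Fin b' × Fin b0) (Fin b' × Fin b0) ℂ),
          IsPOVM P ∧ IsPOVM Q ∧ r = expPayoff G σ' P Q } := by
      intro i
      have hsim := expPayoff_simulate G (γ i) (χ i) P Q μ hμ.2 γ' χ'
        (fun j => (hγ' j).2) (fun j => (hχ' j).2)
      have heq : expPayoff G (γ i ⊗ₖ χ i) P Q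
          = expPayoff G σ'
            (fun x => contractA (P x) (γ i) ⊗ₖ (1 : Matrix (Fin a') (Fin a') ℂ))
            (fun y => (1 : Matrix (Fin b') (Fin b') ℂ) ⊗ₖ contractB (Q y) (χ i)) := by
        rw [hσ'eq]; exact hsim.symm
      rw [heq]
      exact le_csSup hBdd ⟨_, _, isPOVM_tildeA hP (hγ i), isPOVM_tildeB hQ (hχ i), rfl⟩
    calc ∑ i, ν i * expPayoff G (γ i ⊗ₖ χ i) P Q
        ≤ ∑ i, ν i * sSup { r | ∃ (P : Fin nX → Matrix (Fin a0 × Fin a') (Fin a0 × Fin a') ℂ)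
          (Q : Fin nY → Matrix (Fin b' × Fin b0) (Fin b' × Fin b0) ℂ),
          IsPOVM P ∧ IsPOVM Q ∧ r = expPayoff G σ' P Q } :=
          Finset.sum_le_sum fun i _ => mul_le_mul_of_nonneg_left (hle i) (hν.1 i)
      _ = _ := by rw [← Finset.sum_mul, hν.2, one_mul]

/-- in any semi-quantum nonlocal game, all separable states
yield exactly the same optimal payoff. -/
theorem separable_states_same_payoff {nS nT nX nY a0 b0 a b a' b' : ℕ}
    (G : SQGame nS nT nX nY a0 b0)
    (σ : Matrix (Fin a × Fin b) (Fin a × Fin b) ℂ)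
    (σ' : Matrix (Fin a' × Fin b') (Fin a' × Fin b') ℂ)
    (hσd : IsDensity σ) (hσ'd : IsDensity σ')
    (hσ : IsSeparable σ) (hσ' : IsSeparable σ') :
    optPayoff G σ = optPayoff G σ' :=
  le_antisymm (optPayoff_le_of_separable G σ σ' hσd hσ'd hσ hσ')
    (optPayoff_le_of_separable G σ' σ hσ'd hσd hσ' hσ)

end QNL
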